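/- Let λ ∈ P⁺ be a dominant integral weight such that V(λ) occurs as an irreducible G-subrepresentation of the total cohomology H•(G/B, ∧•𝒯_{G/B}) of the sheaf of polyvector fields on the flag variety G/B. Then λ ≤ 2ρ in the dominance order. -/

import Mathlib

open scoped BigOperators

namespace KostantHH

/-- The integral weight lattice of a rank-`ℓ` simple, simply-connected group /
simple Lie algebra, written in fundamental-weight coordinates (so the
fundamental weights `ϖᵢ` are the standard basis vectors, and pairing a weight
with the `i`-th simple coroot is taking its `i`-th coordinate). -/
abbrev P (ℓ : ℕ) := Fin ℓ → ℤ

/-- The group algebra `ℤ[P]` of the weight lattice. -/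
abbrev R (ℓ : ℕ) := AddMonoidAlgebra ℤ (P ℓ)

/-- `e μ` is the basis element `e^μ` of `ℤ[P]`. -/
noncomputable def e {ℓ : ℕ} (μ : P ℓ) : R ℓ := AddMonoidAlgebra.single μ 1

/-- The Weyl vector `ρ = ϖ₁ + ⋯ + ϖ_ℓ`, i.e. `(1,…,1)` in fundamental-weight
coordinates. -/
def ρ {ℓ : ℕ} : P ℓ := fun _ => 1

/-- A weight is dominant iff all its fundamental-weight coordinates (= pairings
with the simple coroots) are nonnegative. -/
def dominant {ℓ : ℕ} (lam : P ℓ) : Prop := ∀ i, 0 ≤ lam i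

/-- The combinatorial root datum of a finite-dimensional simple complex Lie
algebra `𝔤` of rank `ℓ`: the simple roots `α i` (written in fundamental-weight
coordinates, so that `α i j = ⟨α i, αⱼ^∨⟩` is the Cartan matrix) and the set
`Φpos` of positive roots, whose sum is `2ρ`. -/
structure RootDatum (ℓ : ℕ) where
  α : Fin ℓ → P ℓ
  cartan_diag : ∀ i, α i i = 2
  cartan_offdiag : ∀ i j, i ≠ j → α i j ≤ 0
  Φpos : Finset (P ℓ)
  simple_mem : ∀ i, α i ∈ Φpos
  pos_in_cone : ∀ β ∈ Φpos, ∃ c : Fin ℓ → ℕ, β = ∑ i, (c i : ℤ) • α i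
  sum_pos_roots : ∑ β ∈ Φpos, β = (2 : ℤ) • ρ

/-- The dominance (Bruhat–Chevalley) order on weights: `λ ≤ μ` iff `μ - λ` is a
nonnegative integral combination of the simple roots (i.e. lies in `Q⁺`). -/
def domle {ℓ : ℕ} (S : RootDatum ℓ) (lam mu : P ℓ) : Prop :=
  ∃ c : Fin ℓ → ℕ, mu - lam = ∑ i, (c i : ℤ) • S.α i

/-- The simple reflection `sᵢ(μ) = μ - ⟨μ, αᵢ^∨⟩ αᵢ`, as an automorphism of the
weight lattice. -/
def sRefl {ℓ : ℕ} (S : RootDatum ℓ) (i : Fin ℓ) : AddAut (P ℓ) where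
  toFun μ := μ - μ i • S.α i
  invFun μ := μ - μ i • S.α i
  left_inv := by
    intro μ
    funext j
    simp only [Pi.sub_apply, Pi.smul_apply, smul_eq_mul]
    rw [S.cartan_diag i]
    ring
  right_inv := by
    intro μ
    funext j
    simp only [Pi.sub_apply, Pi.smul_apply, smul_eq_mul]
    rw [S.cartan_diag i]
    ring
  map_add' := by
    intro μ ν
    funext j
    simp only [Pi.add_apply, Pi.sub_apply, Pi.smul_apply, smul_eq_mul]
    ring

/-- The Weyl group `W`, realized as the subgroup of automorphisms of the weight
lattice generated by the simple reflections. -/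
def Wgrp {ℓ : ℕ} (S : RootDatum ℓ) : AddSubgroup (AddAut (P ℓ)) :=
  AddSubgroup.closure (Set.range (sRefl S))

/-- `w₀` is the longest element of the Weyl group: the (unique) element sending
all positive roots to negative roots. -/
def IsLongest {ℓ : ℕ} (S : RootDatum ℓ) (w₀ : AddAut (P ℓ)) : Prop :=
  w₀ ∈ Wgrp S ∧ ∀ β ∈ S.Φpos, -(w₀ β) ∈ S.Φpos

/-- The action of a Weyl group element on the group algebra `ℤ[P]`,
`w(e^μ) := e^{w μ}`. -/
noncomputable def wact {ℓ : ℕ} (w : AddAut (P ℓ)) (f : R ℓ) : R ℓ :=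
  AddMonoidAlgebra.mapDomain (⇑w) f

/-- The involution `◇` of `ℤ[P]`, determined by `◇(e^μ) = e^{-μ}`. -/
noncomputable def dia {ℓ : ℕ} (f : R ℓ) : R ℓ :=
  AddMonoidAlgebra.mapDomain (fun μ : P ℓ => -μ) f

/-- The shifted (dot) action of the Weyl group on weights:
`w · λ = w(λ + ρ) - ρ`. -/
def dot {ℓ : ℕ} (w : AddAut (P ℓ)) (lam : P ℓ) : P ℓ := w (lam + ρ) - ρ

/-- `D` is the `i`-th Demazure operator `Dᵢ(f) = (f - e^{-αᵢ}·sᵢ(f))/(1 - e^{-αᵢ})`,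
characterized by the equation `Dᵢ(f)·(1 - e^{-αᵢ}) = f - e^{-αᵢ}·sᵢ(f)`. -/
def IsDemazure {ℓ : ℕ} (S : RootDatum ℓ) (i : Fin ℓ) (D : Module.End ℤ (R ℓ)) : Prop :=
  ∀ f : R ℓ, D f * (1 - e (-(S.α i))) = f - e (-(S.α i)) * wact (sRefl S i) f

/-- `Dw0` is the Demazure operator `D_{w₀} = D_{i₁} ∘ ⋯ ∘ D_{i_k}` attached to a
reduced word `w₀ = s_{i₁} ⋯ s_{i_k}` for the longest element `w₀` (a word for
`w₀` is reduced iff its length is `#Φ⁺ = ℓ(w₀)`). -/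
def IsDw0 {ℓ : ℕ} (S : RootDatum ℓ) (w₀ : AddAut (P ℓ))
    (Dw0 : Module.End ℤ (R ℓ)) : Prop :=
  ∃ (word : List (Fin ℓ)) (D : Fin ℓ → Module.End ℤ (R ℓ)),
    (∀ i, IsDemazure S i (D i)) ∧
    (word.map (sRefl S)).sum = w₀ ∧
    word.length = S.Φpos.card ∧
    Dw0 = (word.map D).prod

/-- The characters of the finite-dimensional irreducible highest weight
`𝔤`-modules `V(λ)`: `chV λ = ch V(λ) = ∑_μ (dim V(λ)_μ) e^μ ∈ ℤ[P]` for
dominant `λ`.  The recorded axioms express that `V(λ)` is a `𝔤`-module with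
highest weight `λ` occurring with multiplicity one: weight multiplicities are
nonnegative, the coefficient of `e^λ` is `1`, all weights are `≤ λ` in
dominance order, and the character is Weyl-group invariant. -/
structure CharTheory {ℓ : ℕ} (S : RootDatum ℓ) where
  chV : P ℓ → R ℓ
  chV_coeff_nonneg : ∀ lam μ, 0 ≤ (chV lam).coeff μ
  chV_self : ∀ lam, dominant lam → (chV lam).coeff lam = 1
  chV_support_le : ∀ lam, dominant lam → ∀ μ ∈ (chV lam).coeff.support, domle S μ lam
  chV_invariant : ∀ lam, dominant lam → ∀ i, wact (sRefl S i) (chV lam) = chV lam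

/-- `g ∈ ℤ[P]` is the character of a finite-dimensional `𝔤`-module, i.e. a sum
of characters of irreducibles `V(μ)` with `μ` dominant. -/
def IsChar {ℓ : ℕ} {S : RootDatum ℓ} (T : CharTheory S) (g : R ℓ) : Prop :=
  ∃ l : List (P ℓ), (∀ μ ∈ l, dominant μ) ∧ g = (l.map T.chV).sum

/-- The irreducible `V(λ)` occurs with multiplicity at least `m` in the
(semisimple, finite-dimensional) `𝔤`-module with character `g`. -/
def OccursWithMult {ℓ : ℕ} {S : RootDatum ℓ} (T : CharTheory S) (m : ℕ)
    (lam : P ℓ) (g : R ℓ) : Prop :=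
  ∃ h : R ℓ, IsChar T h ∧ g = (m : ℤ) • T.chV lam + h

/-- The irreducible `V(λ)` occurs as a subrepresentation of the (semisimple,
finite-dimensional) `𝔤`-module with character `g`. -/
def Occurs {ℓ : ℕ} {S : RootDatum ℓ} (T : CharTheory S) (lam : P ℓ) (g : R ℓ) : Prop :=
  OccursWithMult T 1 lam g


section Aux

variable {ℓ : ℕ}

/-- Membership in the positive cone `Q⁺` of the root lattice. -/
def InQ (S : RootDatum ℓ) (x : P ℓ) : Prop :=
  ∃ c : Fin ℓ → ℕ, x = ∑ i, (c i : ℤ) • S.α i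

lemma InQ_zero (S : RootDatum ℓ) : InQ S 0 :=
  ⟨0, by simp⟩

lemma InQ_add {S : RootDatum ℓ} {x y : P ℓ} (hx : InQ S x) (hy : InQ S y) :
    InQ S (x + y) := by
  obtain ⟨c, rfl⟩ := hx; obtain ⟨d, rfl⟩ := hy
  refine ⟨c + d, ?_⟩
  rw [← Finset.sum_add_distrib]
  refine Finset.sum_congr rfl fun i _ => ?_
  have : ((c + d) i : ℤ) = (c i : ℤ) + (d i : ℤ) := by push_cast [Pi.add_apply]; ring
  rw [this, add_smul]

lemma InQ_sum {S : RootDatum ℓ} {X : Type*} (s : Finset X) (g : X → P ℓ)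
    (h : ∀ x ∈ s, InQ S (g x)) : InQ S (∑ x ∈ s, g x) :=
  Finset.sum_induction g (InQ S) (fun _ _ ha hb => InQ_add ha hb) (InQ_zero S) h

lemma InQ_pos {S : RootDatum ℓ} {β : P ℓ} (h : β ∈ S.Φpos) : InQ S β :=
  S.pos_in_cone β h

lemma InQ_sigma {S : RootDatum ℓ} {A : Finset (P ℓ)} (h : A ⊆ S.Φpos) :
    InQ S (∑ β ∈ A, β) :=
  InQ_sum A (fun x => x) (fun x hx => InQ_pos (h hx))

lemma InQ_natCast_zsmul {S : RootDatum ℓ} (n : ℕ) {x : P ℓ} (h : InQ S x) :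
    InQ S ((n : ℤ) • x) := by
  obtain ⟨c, rfl⟩ := h
  refine ⟨fun i => n * c i, ?_⟩
  rw [Finset.smul_sum]
  refine Finset.sum_congr rfl fun i _ => ?_
  rw [smul_smul]
  norm_cast

/-- existence of a strictly positive coefficient vector for `2ρ`. -/
lemma exists_C (S : RootDatum ℓ) :
    ∃ C : Fin ℓ → ℕ, (∑ i, (C i : ℤ) • S.α i) = (2 : ℤ) • ρ ∧ ∀ j, 0 < C j := by
  classical
  have hQ : InQ S ((2 : ℤ) • ρ) := by
    rw [← S.sum_pos_roots]; exact InQ_sigma (le_refl _)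
  obtain ⟨C, hC⟩ := hQ
  refine ⟨C, hC.symm, ?_⟩
  intro j
  by_contra hj
  push_neg at hj
  have hj0 : C j = 0 := Nat.le_zero.mp hj
  have h2 : ((2 : ℤ) • (ρ : P ℓ)) j = 2 := by simp [ρ]
  rw [hC] at h2
  have hev : (∑ i, (C i : ℤ) • S.α i) j = ∑ i, (C i : ℤ) * S.α i j := by
    rw [Finset.sum_apply]
    exact Finset.sum_congr rfl fun i _ => by simp
  rw [hev] at h2
  have hle : ∑ i, (C i : ℤ) * S.α i j ≤ 0 := by
    apply Finset.sum_nonpos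
    intro i _
    rcases eq_or_ne i j with rfl | hij
    · rw [hj0]; simp
    · exact mul_nonpos_of_nonneg_of_nonpos (by positivity) (S.cartan_offdiag i j hij)
  omega

/-- Nonnegative integral relations among the simple roots are trivial. -/
lemma nat_rel_eq_zero (S : RootDatum ℓ) (m : Fin ℓ → ℕ)
    (hm : ∑ i, (m i : ℤ) • S.α i = 0) (i0 : Fin ℓ) : m i0 = 0 := by
  classical
  obtain ⟨C, hC, hCpos⟩ := exists_C S
  obtain ⟨j, -, hj⟩ := Finset.exists_max_image Finset.univ
    (fun j => (m j : ℚ) / (C j : ℚ)) ⟨i0, Finset.mem_univ _⟩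
  have hv : ∀ k, (0 : ℤ) ≤ (m j : ℤ) * C k - (C j : ℤ) * m k := by
    intro k
    have h1 := hj k (Finset.mem_univ k)
    have hCk : (0 : ℚ) < (C k : ℚ) := by exact_mod_cast hCpos k
    have hCj : (0 : ℚ) < (C j : ℚ) := by exact_mod_cast hCpos j
    rw [div_le_div_iff₀ hCk hCj] at h1
    have : (m k : ℤ) * C j ≤ (m j : ℤ) * C k := by exact_mod_cast h1
    linarith
  have hsum : ∑ k, ((m j : ℤ) * C k - (C j : ℤ) * m k) • S.α k
      = (m j : ℤ) • ((2 : ℤ) • (ρ : P ℓ)) := by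
    have hterm : ∀ k, ((m j : ℤ) * C k - (C j : ℤ) * m k) • S.α k
        = (m j : ℤ) • ((C k : ℤ) • S.α k) - (C j : ℤ) • ((m k : ℤ) • S.α k) := by
      intro k; rw [sub_smul, smul_smul, smul_smul]
    rw [Finset.sum_congr rfl fun k _ => hterm k, Finset.sum_sub_distrib,
      ← Finset.smul_sum, ← Finset.smul_sum, hC, hm, smul_zero, sub_zero]
  have hLHS : (∑ k, ((m j : ℤ) * C k - (C j : ℤ) * m k) • S.α k) j ≤ 0 := by
    rw [Finset.sum_apply]
    apply Finset.sum_nonpos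
    intro k _
    rcases eq_or_ne k j with rfl | hk
    · simp [mul_comm]
    · have h2 : S.α k j ≤ 0 := S.cartan_offdiag k j hk
      have : (((m j : ℤ) * C k - (C j : ℤ) * m k) • S.α k) j
          = ((m j : ℤ) * C k - (C j : ℤ) * m k) * S.α k j := by simp
      rw [this]
      exact mul_nonpos_of_nonneg_of_nonpos (hv k) h2
  have hRHS : ((m j : ℤ) • ((2 : ℤ) • (ρ : P ℓ))) j = (m j : ℤ) * 2 := by simp [ρ]
  rw [hsum, hRHS] at hLHS
  have hmj : m j = 0 := by omega
  -- now every coordinate of m is zero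
  have h3 := hj i0 (Finset.mem_univ i0)
  have hCi : (0 : ℚ) < (C i0 : ℚ) := by exact_mod_cast hCpos i0
  rw [hmj] at h3
  simp only [Nat.cast_zero, zero_div] at h3
  rw [div_le_iff₀ hCi, zero_mul] at h3
  have : (m i0 : ℚ) = 0 := le_antisymm h3 (by positivity)
  exact_mod_cast this

lemma InQ_zsmul_root {S : RootDatum ℓ} {i : Fin ℓ} {n : ℤ}
    (h : InQ S (n • S.α i)) : 0 ≤ n := by
  classical
  by_contra hn
  push_neg at hn
  obtain ⟨c, hcc⟩ := h
  set m : Fin ℓ → ℕ := fun j => c j + if j = i then (-n).toNat else 0 with hm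
  have hrel : ∑ j, (m j : ℤ) • S.α j = 0 := by
    have hterm : ∀ j, (m j : ℤ) • S.α j
        = (c j : ℤ) • S.α j + (if j = i then (-n) • S.α j else 0) := by
      intro j
      simp only [hm]
      rcases eq_or_ne j i with rfl | hji
      · rw [if_pos rfl, if_pos rfl]
        have hcast : ((c j + (-n).toNat : ℕ) : ℤ) = (c j : ℤ) + (-n) := by
          push_cast [Int.toNat_of_nonneg (by omega : (0:ℤ) ≤ -n)]; ring
        rw [hcast, add_smul]
      · rw [if_neg hji, if_neg hji]
        simp
    rw [Finset.sum_congr rfl fun j _ => hterm j, Finset.sum_add_distrib, ← hcc,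
      Finset.sum_ite_eq' Finset.univ i (fun j => (-n) • S.α j), if_pos (Finset.mem_univ i),
      ← add_smul]
    simp
  have h0 := nat_rel_eq_zero S m hrel i
  have h0' : c i + (-n).toNat = 0 := by simpa [hm] using h0
  omega

lemma e_mul (x y : P ℓ) : (e x : R ℓ) * e y = e (x + y) := by
  unfold e
  rw [AddMonoidAlgebra.single_mul_single, one_mul]

lemma e_apply_self (x : P ℓ) : (e x : R ℓ).coeff x = 1 := Finsupp.single_eq_same

lemma e_apply_nonneg (x y : P ℓ) : 0 ≤ (e x : R ℓ).coeff y := by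
  classical
  unfold e
  rw [AddMonoidAlgebra.coeff_single_apply]
  split <;> norm_num

lemma eprod (s : Finset (P ℓ)) : (∏ β ∈ s, (e (-β) : R ℓ)) = e (-∑ β ∈ s, β) := by
  classical
  induction s using Finset.cons_induction with
  | empty => simp [e, AddMonoidAlgebra.one_def]
  | cons a s ha ih =>
      rw [Finset.prod_cons, ih, e_mul, Finset.sum_cons, neg_add]

lemma sum_e_ge_one {X : Type*} {s : Finset X} {g : X → P ℓ} {t₀ : X} (h : t₀ ∈ s)
    {y : P ℓ} (hy : g t₀ = y) : (1 : ℤ) ≤ (∑ t ∈ s, (e (g t) : R ℓ)).coeff y := by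
  rw [AddMonoidAlgebra.coeff_sum, Finsupp.finset_sum_apply]
  calc (1 : ℤ) = (e (g t₀) : R ℓ).coeff y := by rw [hy, e_apply_self]
    _ ≤ ∑ t ∈ s, (e (g t) : R ℓ).coeff y :=
        Finset.single_le_sum (fun t _ => e_apply_nonneg _ _) h

lemma mul_apply_nonneg {f g : R ℓ} (hf : ∀ y, 0 ≤ f.coeff y) (hg : ∀ y, 0 ≤ g.coeff y)
    (y : P ℓ) : 0 ≤ (f * g).coeff y := by
  classical
  rw [AddMonoidAlgebra.coeff_mul]
  simp only [Finsupp.sum]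
  refine Finset.sum_nonneg fun a _ => Finset.sum_nonneg fun b _ => ?_
  split
  · exact mul_nonneg (hf a) (hg b)
  · exact le_rfl

lemma mul_apply_ge {f g : R ℓ} (hf : ∀ y, 0 ≤ f.coeff y) (hg : ∀ y, 0 ≤ g.coeff y)
    (a b : P ℓ) : f.coeff a * g.coeff b ≤ (f * g).coeff (a + b) := by
  classical
  by_cases ha : f.coeff a = 0
  · rw [ha, zero_mul]; exact mul_apply_nonneg hf hg _
  by_cases hb : g.coeff b = 0
  · rw [hb, mul_zero]; exact mul_apply_nonneg hf hg _
  rw [AddMonoidAlgebra.coeff_mul]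
  simp only [Finsupp.sum]
  have hmem_a : a ∈ f.coeff.support := Finsupp.mem_support_iff.mpr ha
  have hmem_b : b ∈ g.coeff.support := Finsupp.mem_support_iff.mpr hb
  have hnn : ∀ a₁, ∀ a₂ ∈ g.coeff.support,
      (0:ℤ) ≤ if a₁ + a₂ = a + b then f.coeff a₁ * g.coeff a₂ else 0 := by
    intro a₁ a₂ _
    split
    · exact mul_nonneg (hf _) (hg _)
    · exact le_rfl
  calc f.coeff a * g.coeff b
        = (if a + b = a + b then f.coeff a * g.coeff b else 0) := by rw [if_pos rfl]
    _ ≤ ∑ a₂ ∈ g.coeff.support, if a + a₂ = a + b then f.coeff a * g.coeff a₂ else 0 :=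
        Finset.single_le_sum (fun a₂ h2 => hnn a a₂ h2) hmem_b
    _ ≤ ∑ a₁ ∈ f.coeff.support, ∑ a₂ ∈ g.coeff.support,
          if a₁ + a₂ = a + b then f.coeff a₁ * g.coeff a₂ else 0 :=
        Finset.single_le_sum
          (fun a₁ _ => Finset.sum_nonneg fun a₂ h2 => hnn a₁ a₂ h2) hmem_a

lemma wact_apply (u : AddAut (P ℓ)) (f : R ℓ) (x : P ℓ) :
    (wact u f).coeff (u x) = f.coeff x :=
  Finsupp.mapDomain_apply u.injective f.coeff x

lemma wact_wact (u v : AddAut (P ℓ)) (f : R ℓ) : wact u (wact v f) = wact (u + v) f := by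
  apply AddMonoidAlgebra.coeff_injective
  show Finsupp.mapDomain u (Finsupp.mapDomain v f.coeff) = Finsupp.mapDomain (⇑(u + v)) f.coeff
  rw [← Finsupp.mapDomain_comp]
  rfl

lemma wact_one (f : R ℓ) : wact (0 : AddAut (P ℓ)) f = f := by
  apply AddMonoidAlgebra.coeff_injective
  show Finsupp.mapDomain (⇑(0 : AddAut (P ℓ))) f.coeff = f.coeff
  have : ⇑(0 : AddAut (P ℓ)) = id := rfl
  rw [this, Finsupp.mapDomain_id]

lemma wact_fix_inv {u : AddAut (P ℓ)} {f : R ℓ} (h : wact u f = f) :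
    wact (-u) f = f := by
  conv_lhs => rw [← h]
  rw [wact_wact, neg_add_cancel, wact_one]

lemma winv {S : RootDatum ℓ} {f : R ℓ} (hf : ∀ i, wact (sRefl S i) f = f) :
    ∀ u ∈ Wgrp S, wact u f = f := by
  intro u hu
  have hu' : u ∈ AddSubgroup.closure (Set.range (sRefl S)) := hu
  clear hu
  induction hu' using AddSubgroup.closure_induction with
  | mem x hx => obtain ⟨i, rfl⟩ := hx; exact hf i
  | zero => exact wact_one f
  | add x y hx hy ihx ihy => rw [← wact_wact, ihy, ihx]
  | neg x hx ih => exact wact_fix_inv ih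

lemma wact_mul (u : AddAut (P ℓ)) (f g : R ℓ) :
    wact u (f * g) = wact u f * wact u g := by
  unfold wact
  exact AddMonoidAlgebra.mapDomain_mul (F := P ℓ ≃+ P ℓ) u f g

lemma sRefl_apply (S : RootDatum ℓ) (i : Fin ℓ) (z : P ℓ) :
    sRefl S i z = z - z i • S.α i := rfl

end Aux

/-- Let `λ ∈ P⁺` be a dominant integral weight such that
`V(λ)` occurs as an irreducible `G`-subrepresentation of the total cohomology
`H•(G/B, ∧•𝒯_{G/B})` of the sheaf of polyvector fields on the flag variety
`G/B`.  Then `λ ≤ 2ρ` in the dominance order.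

Here `∧•𝒯_{G/B} = 𝓛(∧•𝔲)` where `𝔲` is spanned by the negative root spaces, so
the multiset of weights of the `B`-module `∧•𝔲` is
`grT = { -∑_{β ∈ A} β : A ⊆ Φ⁺ }` (hypothesis `hgrT`); `Hgr ξ` is the character
of `H•(G/B, 𝓛(-ξ))`, constrained by the Borel–Weil–Bott theorem (`hBWB`); `HT`
is the character of `H•(G/B, ∧•𝒯_{G/B})`, a quotient of `⊕_{ξ} H•(G/B, 𝓛(-ξ))`
(`hsurj`); and `hchρ` records the character formula
`ch V(ρ) = e^ρ ∏_{β∈Φ⁺}(1+e^{-β})`. -/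
theorem occurs_in_polyvector_cohomology_le_two_rho
    {ℓ : ℕ} (S : RootDatum ℓ) (T : CharTheory S)
    (w₀ : AddAut (P ℓ)) (hw₀ : IsLongest S w₀)
    (hchρ : T.chV ρ = e ρ * ∏ β ∈ S.Φpos, (1 + e (-β)))
    (grT : Multiset (P ℓ))
    (hgrT : grT = S.Φpos.powerset.val.map (fun A => -(∑ β ∈ A, β)))
    (Hgr : P ℓ → R ℓ)
    (hBWB : ∀ ξ ∈ grT, Hgr ξ = 0 ∨ ∃ w ∈ Wgrp S, dominant (dot w (-ξ)) ∧
      Hgr ξ = T.chV (-(w₀ (dot w (-ξ)))))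
    (HT : R ℓ)
    (hsurj : ∃ h : R ℓ, IsChar T h ∧ (grT.map Hgr).sum = HT + h)
    (lam : P ℓ) (hlam : dominant lam)
    (hocc : Occurs T lam HT) :
    domle S lam ((2 : ℤ) • ρ) := by
  classical
  obtain ⟨hw₀W, hw₀Φ⟩ := hw₀
  -- the involution τ = -w₀
  set τ : P ℓ → P ℓ := fun x => -(w₀ x) with hτdef
  have hτsub : ∀ x y : P ℓ, τ (x - y) = τ x - τ y := by
    intro x y; simp only [hτdef, map_sub]; abel
  have hτQ : ∀ x, InQ S x → InQ S (τ x) := by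
    rintro x ⟨c, rfl⟩
    have hexp : τ (∑ i, (c i : ℤ) • S.α i) = ∑ i, (c i : ℤ) • (-(w₀ (S.α i))) := by
      simp only [hτdef, map_sum, map_zsmul, ← Finset.sum_neg_distrib, smul_neg]
    rw [hexp]
    exact InQ_sum _ _ fun i _ =>
      InQ_natCast_zsmul (c i) (InQ_pos (hw₀Φ (S.α i) (S.simple_mem i)))
  have hτinj : Function.Injective (fun β : P ℓ => -(w₀ β)) := by
    intro x y hxy
    exact w₀.injective (neg_injective hxy)
  have himg : Finset.image (fun β : P ℓ => -(w₀ β)) S.Φpos = S.Φpos := by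
    apply Finset.eq_of_subset_of_card_le
    · intro y hy
      rw [Finset.mem_image] at hy
      obtain ⟨β, hβ, rfl⟩ := hy
      exact hw₀Φ β hβ
    · rw [Finset.card_image_of_injective _ hτinj]
  have hτ2ρ : τ ((2 : ℤ) • (ρ : P ℓ)) = (2 : ℤ) • (ρ : P ℓ) := by
    have h1 : ∑ β ∈ S.Φpos, -(w₀ β) = ∑ β ∈ S.Φpos, β := by
      conv_rhs => rw [← himg]
      rw [Finset.sum_image (fun x _ y _ h => hτinj h)]
    calc τ ((2 : ℤ) • (ρ : P ℓ)) = -(w₀ (∑ β ∈ S.Φpos, β)) := by rw [S.sum_pos_roots]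
      _ = ∑ β ∈ S.Φpos, -(w₀ β) := by rw [map_sum, Finset.sum_neg_distrib]
      _ = (2 : ℤ) • (ρ : P ℓ) := by rw [h1, S.sum_pos_roots]
  -- extract a ξ contributing λ
  obtain ⟨h1, hchar1, hHT⟩ := hocc
  obtain ⟨h2, hchar2, hsum⟩ := hsurj
  have hcharnn : ∀ g : R ℓ, IsChar T g → 0 ≤ g.coeff lam := by
    rintro g ⟨l, -, rfl⟩
    have happ : ((l.map T.chV).sum).coeff lam
        = ((l.map T.chV).map fun f : R ℓ => f.coeff lam).sum :=
      map_list_sum ((Finsupp.applyAddHom lam).comp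
        (AddMonoidAlgebra.coeffAddEquiv : R ℓ ≃+ (P ℓ →₀ ℤ)).toAddMonoidHom) _
    rw [happ, List.map_map]
    apply List.sum_nonneg
    intro x hx
    rw [List.mem_map] at hx
    obtain ⟨μ', -, rfl⟩ := hx
    exact T.chV_coeff_nonneg μ' lam
  have hpos : (1 : ℤ) ≤ (grT.map Hgr).sum.coeff lam := by
    have hev : (grT.map Hgr).sum.coeff lam = HT.coeff lam + h2.coeff lam := by
      rw [hsum, AddMonoidAlgebra.coeff_add]
      exact Finsupp.add_apply _ _ _
    have hev2 : HT.coeff lam = (T.chV lam).coeff lam + h1.coeff lam := by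
      rw [hHT, show ((1:ℕ):ℤ) • T.chV lam = T.chV lam by norm_num, AddMonoidAlgebra.coeff_add]
      exact Finsupp.add_apply _ _ _
    rw [hev, hev2, T.chV_self lam hlam]
    have := hcharnn h1 hchar1
    have := hcharnn h2 hchar2
    linarith
  have hex : ∃ ξ ∈ grT, (Hgr ξ).coeff lam ≠ 0 := by
    by_contra hc
    push_neg at hc
    have hz : (grT.map Hgr).sum.coeff lam = 0 := by
      have happ : ((grT.map Hgr).sum).coeff lam
          = ((grT.map Hgr).map fun f : R ℓ => f.coeff lam).sum :=
        map_multiset_sum ((Finsupp.applyAddHom lam).comp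
          (AddMonoidAlgebra.coeffAddEquiv : R ℓ ≃+ (P ℓ →₀ ℤ)).toAddMonoidHom) _
      rw [happ, Multiset.map_map]
      apply Multiset.sum_eq_zero
      intro x hx
      rw [Multiset.mem_map] at hx
      obtain ⟨ξ, hξ, rfl⟩ := hx
      exact hc ξ hξ
    rw [hz] at hpos
    norm_num at hpos
  obtain ⟨ξ, hξmem, hξne⟩ := hex
  have hξmem2 := hξmem
  rw [hgrT] at hξmem2
  obtain ⟨A, hAmem, hAξ⟩ := Multiset.mem_map.mp hξmem2
  have hA : A ⊆ S.Φpos := Finset.mem_powerset.mp (Finset.mem_val.mp hAmem)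
  have hσξ : -ξ = ∑ β ∈ A, β := by rw [← hAξ, neg_neg]
  rcases hBWB ξ hξmem with h0 | ⟨w, hwW, hνdom, hHgr⟩
  · rw [h0] at hξne
    simp at hξne
  set ν : P ℓ := dot w (-ξ) with hνdef
  set μ : P ℓ := -(w₀ ν) with hμdef
  rw [hHgr] at hξne
  -- (F1) : ν dominates its Weyl orbit
  have hF1 : ∀ u ∈ Wgrp S, InQ S (ν - u ν) := by
    intro u hu
    have hinv : wact u (T.chV ν) = T.chV ν :=
      winv (fun i => T.chV_invariant ν hνdom i) u hu
    have hval : (T.chV ν).coeff (u ν) = 1 := by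
      conv_lhs => rw [← hinv]
      rw [wact_apply, T.chV_self ν hνdom]
    exact T.chV_support_le ν hνdom (u ν)
      (Finsupp.mem_support_iff.mpr (by rw [hval]; norm_num))
  -- Step A : μ is dominant
  have hμdom : dominant μ := by
    intro i
    have hsi : sRefl S i ∈ Wgrp S := AddSubgroup.subset_closure ⟨i, rfl⟩
    have huW : -w₀ + (sRefl S i + w₀) ∈ Wgrp S :=
      add_mem (neg_mem hw₀W) (add_mem hsi hw₀W)
    have h1 : InQ S (τ (ν - (-w₀ + (sRefl S i + w₀)) ν)) := hτQ _ (hF1 _ huW)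
    have happ : (-w₀ + (sRefl S i + w₀)) ν = (-w₀) ((sRefl S i) (w₀ ν)) := by
      rw [AddAut.add_apply, AddAut.add_apply]
    have h2 : τ (ν - (-w₀ + (sRefl S i + w₀)) ν) = μ i • S.α i := by
      rw [happ]
      have hw0inv : w₀ ((-w₀) ((sRefl S i) (w₀ ν))) = (sRefl S i) (w₀ ν) :=
        AddAut.apply_neg_self _ w₀ _
      calc τ (ν - (-w₀) ((sRefl S i) (w₀ ν)))
          = -(w₀ ν) + (sRefl S i) (w₀ ν) := by
            simp only [hτdef, map_sub, hw0inv]; abel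
        _ = μ i • S.α i := by
            rw [sRefl_apply]
            show -(w₀ ν) + (w₀ ν - (w₀ ν) i • S.α i) = (-(w₀ ν)) i • S.α i
            rw [Pi.neg_apply, neg_smul]
            abel
    rw [h2] at h1
    exact InQ_zsmul_root h1
  -- Step B : InQ (2ρ - ν), via the support of (ch V(ρ))³
  have hρdom : dominant (ρ : P ℓ) := fun i => by norm_num [ρ]
  have hFexp : T.chV ρ = ∑ t ∈ S.Φpos.powerset, e (ρ - ∑ β ∈ S.Φpos \ t, β) := by
    rw [hchρ, Finset.prod_add, Finset.mul_sum]
    refine Finset.sum_congr rfl fun t ht => ?_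
    rw [Finset.prod_const_one, one_mul, eprod, e_mul, ← sub_eq_add_neg]
  have hFnn : ∀ y, 0 ≤ (T.chV ρ).coeff y := fun y => T.chV_coeff_nonneg ρ y
  have hFFnn : ∀ y, 0 ≤ (T.chV ρ * T.chV ρ).coeff y := fun y => mul_apply_nonneg hFnn hFnn y
  set F3 : R ℓ := T.chV ρ * T.chV ρ * T.chV ρ with hF3def
  have hF3inv : ∀ u ∈ Wgrp S, wact u F3 = F3 := by
    intro u hu
    refine winv (fun i => ?_) u hu
    rw [hF3def, wact_mul, wact_mul, T.chV_invariant ρ hρdom i]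
  have hσc : (∑ β ∈ S.Φpos \ A, β) + ∑ β ∈ A, β = (2 : ℤ) • (ρ : P ℓ) := by
    rw [Finset.sum_sdiff hA, S.sum_pos_roots]
  have hcoefc : (1 : ℤ) ≤ (T.chV ρ).coeff (ρ - ∑ β ∈ S.Φpos \ A, β) := by
    rw [hFexp]
    exact sum_e_ge_one (Finset.mem_powerset.mpr hA) rfl
  have hcoefρ : (1 : ℤ) ≤ (T.chV ρ).coeff (ρ : P ℓ) := le_of_eq (T.chV_self ρ hρdom).symm
  have hpos1 : (1 : ℤ) ≤ (T.chV ρ * T.chV ρ).coeff (ρ + (ρ - ∑ β ∈ S.Φpos \ A, β)) := by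
    calc (1 : ℤ) = 1 * 1 := by norm_num
      _ ≤ (T.chV ρ).coeff (ρ : P ℓ) * (T.chV ρ).coeff (ρ - ∑ β ∈ S.Φpos \ A, β) :=
          mul_le_mul hcoefρ hcoefc (by norm_num) (by linarith)
      _ ≤ (T.chV ρ * T.chV ρ).coeff (ρ + (ρ - ∑ β ∈ S.Φpos \ A, β)) :=
          mul_apply_ge hFnn hFnn _ _
  have hpos3 : (1 : ℤ) ≤ F3.coeff ((ρ + (ρ - ∑ β ∈ S.Φpos \ A, β)) + ρ) := by
    calc (1 : ℤ) = 1 * 1 := by norm_num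
      _ ≤ (T.chV ρ * T.chV ρ).coeff (ρ + (ρ - ∑ β ∈ S.Φpos \ A, β)) *
            (T.chV ρ).coeff (ρ : P ℓ) :=
          mul_le_mul hpos1 hcoefρ (by norm_num) (by linarith)
      _ ≤ F3.coeff ((ρ + (ρ - ∑ β ∈ S.Φpos \ A, β)) + ρ) := mul_apply_ge hFFnn hFnn _ _
  have htarget : (ρ + (ρ - ∑ β ∈ S.Φpos \ A, β)) + ρ = (∑ β ∈ A, β) + ρ := by
    have hc2 : ∑ β ∈ S.Φpos \ A, β = (2 : ℤ) • (ρ : P ℓ) - ∑ β ∈ A, β := by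
      rw [← hσc]; abel
    rw [hc2, two_zsmul]; abel
  have hν2 : ν + ρ = w ((∑ β ∈ A, β) + ρ) := by
    rw [hνdef, dot, hσξ, sub_add_cancel]
  have hF3val : F3.coeff (w ((∑ β ∈ A, β) + ρ)) ≠ 0 := by
    have hval : F3.coeff (w ((∑ β ∈ A, β) + ρ)) = F3.coeff ((∑ β ∈ A, β) + ρ) := by
      conv_lhs => rw [← hF3inv w hwW]
      exact wact_apply w F3 _
    rw [hval, ← htarget]
    intro h0
    rw [h0] at hpos3
    norm_num at hpos3
  have hsuppFF : ∀ y ∈ (T.chV ρ).coeff.support, InQ S (ρ - y) := by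
    intro y hy
    rw [hFexp, AddMonoidAlgebra.coeff_sum] at hy
    have hbi := Finsupp.support_finset_sum hy
    rw [Finset.mem_biUnion] at hbi
    obtain ⟨t, ht, hyt⟩ := hbi
    have hsing : y ∈ ({ρ - ∑ β ∈ S.Φpos \ t, β} : Finset (P ℓ)) :=
      Finsupp.support_single_subset hyt
    rw [Finset.mem_singleton] at hsing
    rw [hsing]
    have heq : ρ - (ρ - ∑ β ∈ S.Φpos \ t, β) = ∑ β ∈ S.Φpos \ t, β := by abel
    rw [heq]
    exact InQ_sigma (Finset.sdiff_subset)
  have hB : InQ S ((2 : ℤ) • (ρ : P ℓ) - ν) := by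
    have hmem : w ((∑ β ∈ A, β) + ρ) ∈ F3.coeff.support := Finsupp.mem_support_iff.mpr hF3val
    have h1 := AddMonoidAlgebra.support_coeff_mul_subset (T.chV ρ * T.chV ρ) (T.chV ρ) hmem
    rw [Finset.mem_add] at h1
    obtain ⟨x, hx, y3, hy3, hxy⟩ := h1
    have h2 := AddMonoidAlgebra.support_coeff_mul_subset (T.chV ρ) (T.chV ρ) hx
    rw [Finset.mem_add] at h2
    obtain ⟨y1, hy1, y2, hy2, hyy⟩ := h2
    have q1 := hsuppFF y1 hy1
    have q2 := hsuppFF y2 hy2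
    have q3 := hsuppFF y3 hy3
    have hsum3 : y1 + y2 + y3 = ν + ρ := by
      rw [hν2, ← hxy, ← hyy]
    have hkey : (2 : ℤ) • (ρ : P ℓ) - ν = (ρ - y1) + (ρ - y2) + (ρ - y3) := by
      have h3 : ν = y1 + y2 + y3 - ρ := by rw [hsum3]; abel
      rw [h3, two_zsmul]; abel
    rw [hkey]
    exact InQ_add (InQ_add q1 q2) q3
  -- Step C : λ ≤ μ
  have hlamle : InQ S (μ - lam) :=
    T.chV_support_le μ hμdom lam (Finsupp.mem_support_iff.mpr hξne)
  -- Step D : μ ≤ 2ρ and conclude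
  have h2ρμ : InQ S ((2 : ℤ) • (ρ : P ℓ) - μ) := by
    have h1 := hτQ _ hB
    have heq : τ ((2 : ℤ) • (ρ : P ℓ) - ν) = (2 : ℤ) • (ρ : P ℓ) - μ := by
      rw [hτsub, hτ2ρ]
    rwa [heq] at h1
  have hfinal : InQ S ((2 : ℤ) • (ρ : P ℓ) - lam) := by
    have := InQ_add h2ρμ hlamle
    rwa [show ((2 : ℤ) • (ρ : P ℓ) - μ) + (μ - lam) = (2 : ℤ) • (ρ : P ℓ) - lam by abel]
      at this
  exact hfinal

end KostantHH
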